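/- Let A₁, A₂ be real r×r matrices, B₁, B₂ real r×d matrices, and define g_i : ℝ^{d×r} → ℝ by g_i(W) = tr(W A_i Wᵀ) − 2 tr(W B_i) for i = 1, 2. Let κ > 0, R > 0, and let W₁, W₂ ∈ ℝ^{d×r} satisfy ‖W₁‖_F ≤ R and ‖W₂‖_F ≤ R. Suppose g₂(W₁) − g₂(W₂) ≥ κ ‖W₁ − W₂‖_F² and g₁(W₁) ≤ g₁(W₂). Then κ ‖W₁ − W₂‖_F ≤ 2 (R ‖A₁ − A₂‖_F + ‖B₁ − B₂‖_F). In particular, if ‖A₁ − A₂‖_F ≤ C w and ‖B₁ − B₂‖_F ≤ C' w for constants C, C' and some w > 0, then ‖W₁ − W₂‖_F ≤ κ⁻¹ 2 (R C + C') w. -/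
import Mathlib

open Matrix

noncomputable def frobNorm {m n : ℕ} (M : Matrix (Fin m) (Fin n) ℝ) : ℝ :=
  Real.sqrt (∑ i, ∑ j, (M i j) ^ 2)

attribute [local instance] Matrix.frobeniusSeminormedAddCommGroup

lemma frobNorm_eq_norm {m n : ℕ} (M : Matrix (Fin m) (Fin n) ℝ) : frobNorm M = ‖M‖ := by
  rw [Matrix.frobenius_norm_def, ← Real.sqrt_eq_rpow, frobNorm]
  congr 1
  refine Finset.sum_congr rfl fun i _ => Finset.sum_congr rfl fun j _ => ?_
  rw [show ((2:ℝ)) = ((2:ℕ):ℝ) by norm_num, Real.rpow_natCast]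
  simp [Real.norm_eq_abs, sq_abs]

lemma frobNorm_nonneg {m n : ℕ} (M : Matrix (Fin m) (Fin n) ℝ) : 0 ≤ frobNorm M :=
  Real.sqrt_nonneg _

lemma frobNorm_sq {m n : ℕ} (M : Matrix (Fin m) (Fin n) ℝ) :
    frobNorm M ^ 2 = ∑ i, ∑ j, (M i j) ^ 2 :=
  Real.sq_sqrt (Finset.sum_nonneg fun _ _ => Finset.sum_nonneg fun _ _ => sq_nonneg _)

lemma frobNorm_transpose {m n : ℕ} (M : Matrix (Fin m) (Fin n) ℝ) :
    frobNorm Mᵀ = frobNorm M := by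
  rw [frobNorm, frobNorm, Finset.sum_comm]
  rfl

lemma frobNorm_neg' {m n : ℕ} (M N : Matrix (Fin m) (Fin n) ℝ) :
    frobNorm (M - N) = frobNorm (N - M) := by
  rw [frobNorm_eq_norm, frobNorm_eq_norm, ← neg_sub, norm_neg]

lemma frobNorm_mul_le {m n k : ℕ} (X : Matrix (Fin m) (Fin n) ℝ) (Y : Matrix (Fin n) (Fin k) ℝ) :
    frobNorm (X * Y) ≤ frobNorm X * frobNorm Y := by
  simp only [frobNorm_eq_norm]
  exact Matrix.frobenius_norm_mul X Y

lemma trace_le_frob {m n : ℕ} (X : Matrix (Fin m) (Fin n) ℝ) (Y : Matrix (Fin n) (Fin m) ℝ) :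
    |(X * Y).trace| ≤ frobNorm X * frobNorm Y := by
  have htr : (X * Y).trace = ∑ p ∈ (Finset.univ ×ˢ Finset.univ),
      X p.1 p.2 * Y p.2 p.1 := by
    rw [Finset.sum_product]
    simp [Matrix.trace, Matrix.mul_apply, Matrix.diag]
  have hcs := Finset.sum_mul_sq_le_sq_mul_sq (Finset.univ ×ˢ Finset.univ)
    (fun p : Fin m × Fin n => X p.1 p.2) (fun p => Y p.2 p.1)
  have h1 : ∑ p ∈ (Finset.univ ×ˢ Finset.univ), (X p.1 p.2) ^ 2 = frobNorm X ^ 2 := by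
    rw [frobNorm_sq, Finset.sum_product]
  have h2 : ∑ p ∈ (Finset.univ ×ˢ Finset.univ), (Y p.2 p.1) ^ 2 = frobNorm Y ^ 2 := by
    rw [frobNorm_sq, Finset.sum_product, Finset.sum_comm]
  rw [h1, h2, ← mul_pow] at hcs
  calc |(X * Y).trace| = Real.sqrt ((X * Y).trace ^ 2) := (Real.sqrt_sq_eq_abs _).symm
    _ ≤ Real.sqrt ((frobNorm X * frobNorm Y) ^ 2) := Real.sqrt_le_sqrt (by rw [htr]; exact hcs)
    _ = frobNorm X * frobNorm Y := Real.sqrt_sq (mul_nonneg (frobNorm_nonneg _) (frobNorm_nonneg _))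

theorem stmt5 {r d : ℕ} (A₁ A₂ : Matrix (Fin r) (Fin r) ℝ) (B₁ B₂ : Matrix (Fin r) (Fin d) ℝ)
    (g₁ g₂ : Matrix (Fin d) (Fin r) ℝ → ℝ)
    (hg₁ : ∀ W, g₁ W = (W * A₁ * Wᵀ).trace - 2 * (W * B₁).trace)
    (hg₂ : ∀ W, g₂ W = (W * A₂ * Wᵀ).trace - 2 * (W * B₂).trace)
    (κ R : ℝ) (hκ : 0 < κ) (hR : 0 < R)
    (W₁ W₂ : Matrix (Fin d) (Fin r) ℝ)
    (hW₁ : frobNorm W₁ ≤ R) (hW₂ : frobNorm W₂ ≤ R)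
    (hgrow : κ * frobNorm (W₁ - W₂) ^ 2 ≤ g₂ W₁ - g₂ W₂)
    (hmin : g₁ W₁ ≤ g₁ W₂) :
    κ * frobNorm (W₁ - W₂) ≤ 2 * (R * frobNorm (A₁ - A₂) + frobNorm (B₁ - B₂)) ∧
      ∀ C C' w : ℝ, 0 < w → frobNorm (A₁ - A₂) ≤ C * w → frobNorm (B₁ - B₂) ≤ C' * w →
        frobNorm (W₁ - W₂) ≤ κ⁻¹ * 2 * (R * C + C') * w := by
  set Δ := W₁ - W₂ with hΔ
  set D := A₂ - A₁ with hD
  set E := B₂ - B₁ with hE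
  have key : κ * frobNorm Δ ≤ 2 * (R * frobNorm (A₁ - A₂) + frobNorm (B₁ - B₂)) := by
    have hdecomp : g₂ W₁ - g₂ W₂ - (g₁ W₁ - g₁ W₂) =
        (Δ * (D * W₁ᵀ)).trace + (W₂ * (D * Δᵀ)).trace - 2 * (Δ * E).trace := by
      simp only [hg₁, hg₂, hΔ, hD, hE]
      simp only [Matrix.sub_mul, Matrix.mul_sub, Matrix.transpose_sub, Matrix.trace_sub,
        Matrix.mul_assoc]
      ring
    have hle : κ * frobNorm Δ ^ 2 ≤
        (Δ * (D * W₁ᵀ)).trace + (W₂ * (D * Δᵀ)).trace - 2 * (Δ * E).trace := by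
      rw [← hdecomp]; linarith
    have hb1 : (Δ * (D * W₁ᵀ)).trace ≤ frobNorm Δ * (frobNorm D * frobNorm W₁) := by
      refine le_trans (le_abs_self _) (le_trans (trace_le_frob _ _) ?_)
      have := frobNorm_mul_le D W₁ᵀ
      rw [frobNorm_transpose] at this
      exact mul_le_mul_of_nonneg_left this (frobNorm_nonneg _)
    have hb2 : (W₂ * (D * Δᵀ)).trace ≤ frobNorm W₂ * (frobNorm D * frobNorm Δ) := by
      refine le_trans (le_abs_self _) (le_trans (trace_le_frob _ _) ?_)
      have := frobNorm_mul_le D Δᵀ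
      rw [frobNorm_transpose] at this
      exact mul_le_mul_of_nonneg_left this (frobNorm_nonneg _)
    have hb3 : -(Δ * E).trace ≤ frobNorm Δ * frobNorm E :=
      le_trans (neg_le_abs _) (trace_le_frob _ _)
    have hDflip : frobNorm D = frobNorm (A₁ - A₂) := frobNorm_neg' _ _
    have hEflip : frobNorm E = frobNorm (B₁ - B₂) := frobNorm_neg' _ _
    have hΔnn := frobNorm_nonneg Δ
    have hDnn := frobNorm_nonneg D
    have hEnn := frobNorm_nonneg E
    have hW1nn := frobNorm_nonneg W₁
    have hfinal : κ * frobNorm Δ ^ 2 ≤ frobNorm Δ * (2 * (R * frobNorm D + frobNorm E)) := by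
      have hb1' : (Δ * (D * W₁ᵀ)).trace ≤ frobNorm Δ * (frobNorm D * R) :=
        le_trans hb1 (by gcongr)
      have hb2' : (W₂ * (D * Δᵀ)).trace ≤ R * (frobNorm D * frobNorm Δ) :=
        le_trans hb2 (by gcongr)
      nlinarith
    rcases eq_or_lt_of_le hΔnn with h0 | hpos
    · rw [← h0, mul_zero]
      rw [← hDflip, ← hEflip]
      positivity
    · rw [← hDflip, ← hEflip]
      have : κ * frobNorm Δ ^ 2 = (κ * frobNorm Δ) * frobNorm Δ := by ring
      rw [this] at hfinal
      rw [mul_comm] at hfinal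
      exact le_of_mul_le_mul_left (by linarith [hfinal]) hpos
  refine ⟨key, fun C C' w hw hA hB => ?_⟩
  have h2 : κ * frobNorm Δ ≤ 2 * (R * C + C') * w := by
    have hRC : R * frobNorm (A₁ - A₂) ≤ R * (C * w) :=
      mul_le_mul_of_nonneg_left hA hR.le
    nlinarith
  rw [inv_mul_eq_div, div_mul_eq_mul_div, div_mul_eq_mul_div, le_div_iff₀ hκ]
  calc frobNorm Δ * κ = κ * frobNorm Δ := by ring
    _ ≤ 2 * (R * C + C') * w := h2
    _ = 2 * (R * C + C') * w := rfl
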